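/- For any two elements e = (i,a) and e' = (u,v) of Ω lying in distinct blocks (u ≠ i), and any x ∈ ℝ^Ω, the mixed second partial derivative of the partition multilinear extension satisfies ∂²f̃/∂x_{e'}∂x_e(x) = Σ_{A ∈ I^{-{i,u}}} (∏_{j ∈ N, j ∉ {i,u}} p_j(A; x)) · [ (F(A ∪ {e',e}) − F(A ∪ {e'})) − (F(A ∪ {e}) − F(A)) ], where I^{-{i,u}} = {A ∈ I : A ∩ Ω_i = ∅ and A ∩ Ω_u = ∅}. Moreover, if F is submodular then for every x in the partition matroid polytope P this mixed second partial derivative is ≤ 0. -/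

import Mathlib

open Finset
open scoped Classical

/-- Feasibility in the partition matroid: at most one element per block. -/
def feasible {N Ω : Type*} [Fintype N] [Fintype Ω] (blk : Ω → N) (A : Finset Ω) : Prop :=
  ∀ i : N, (A.filter (fun e => blk e = i)).card ≤ 1

/-- Per-agent probability factor `p_i(A; x)`. -/
noncomputable def blockProb {N Ω : Type*} [Fintype N] [Fintype Ω] (blk : Ω → N) (x : Ω → ℝ)
    (A : Finset Ω) (i : N) : ℝ :=
  if A.filter (fun e => blk e = i) = ∅ then
    1 - ∑ e ∈ Finset.univ.filter (fun e => blk e = i), x e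
  else ∑ e ∈ A.filter (fun e => blk e = i), x e

/-- The partition multilinear extension. -/
noncomputable def pme {N Ω : Type*} [Fintype N] [Fintype Ω] (blk : Ω → N) (F : Finset Ω → ℝ)
    (x : Ω → ℝ) : ℝ :=
  ∑ A ∈ Finset.univ.filter (fun A => feasible blk A), F A * ∏ i : N, blockProb blk x A i

/-- Partial derivative of `f` in coordinate `e` at `x`. -/
noncomputable def pderiv {Ω : Type*} (f : (Ω → ℝ) → ℝ) (e : Ω) (x : Ω → ℝ) : ℝ :=
  deriv (fun t : ℝ => f (Function.update x e t)) (x e)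

/-- Membership in the partition matroid polytope `P`. -/
def memPolytope {N Ω : Type*} [Fintype N] [Fintype Ω] (blk : Ω → N) (x : Ω → ℝ) : Prop :=
  (∀ e, 0 ≤ x e ∧ x e ≤ 1) ∧
    ∀ i : N, ∑ e ∈ Finset.univ.filter (fun e => blk e = i), x e ≤ 1

/-- Membership in the categorical face `𝓕` of the partition matroid polytope. -/
def memFace {N Ω : Type*} [Fintype N] [Fintype Ω] (blk : Ω → N) (x : Ω → ℝ) : Prop :=
  (∀ e, 0 ≤ x e ∧ x e ≤ 1) ∧
    ∀ i : N, ∑ e ∈ Finset.univ.filter (fun e => blk e = i), x e = 1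

/-- Submodularity of a set function. -/
def Submodular {Ω : Type*} [Fintype Ω] (F : Finset Ω → ℝ) : Prop :=
  ∀ A B : Finset Ω, A ⊆ B → ∀ e ∉ B, F (insert e B) - F B ≤ F (insert e A) - F A

/-- Coefficient of `t` in `blockProb blk (update x e' t) A u`. -/
noncomputable def coefR {N Ω : Type*} [Fintype N] [Fintype Ω] (blk : Ω → N) (u : N) (e' : Ω)
    (A : Finset Ω) : ℝ :=
  if A.filter (fun a => blk a = u) = ∅ then -1 else if e' ∈ A then 1 else 0

section aux
variable {N Ω : Type*} [Fintype N] [Fintype Ω] {blk : Ω → N}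

lemma sum_update_mem {s : Finset Ω} {e' : Ω} (h : e' ∈ s) (x : Ω → ℝ) (t : ℝ) :
    ∑ a ∈ s, Function.update x e' t a = (∑ a ∈ s, x a) + (t - x e') := by
  rw [Finset.sum_update_of_mem h, Finset.sdiff_singleton_eq_erase,
    ← Finset.add_sum_erase s x h]
  ring

lemma blockProb_update {u : N} {e' : Ω} (he' : blk e' = u) (x : Ω → ℝ) (t : ℝ) (A : Finset Ω) :
    blockProb blk (Function.update x e' t) A u
      = blockProb blk x A u + coefR blk u e' A * (t - x e') := by
  unfold blockProb coefR
  by_cases h0 : A.filter (fun a => blk a = u) = ∅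
  · rw [if_pos h0, if_pos h0, if_pos h0,
      sum_update_mem (by simp [he']) x t]
    ring
  · rw [if_neg h0, if_neg h0, if_neg h0]
    by_cases he : e' ∈ A
    · rw [if_pos he, sum_update_mem (by simp [he, he']) x t]
      ring
    · rw [if_neg he]
      have : ∑ a ∈ A.filter (fun a => blk a = u), Function.update x e' t a
          = ∑ a ∈ A.filter (fun a => blk a = u), x a :=
        Finset.sum_congr rfl fun a ha =>
          Function.update_of_ne (fun h => he (by rw [← h]; exact (Finset.mem_filter.mp ha).1)) _ _
      rw [this]; ring

lemma blockProb_update_ne {u j : N} {e' : Ω} (he' : blk e' = u) (hj : j ≠ u)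
    (x : Ω → ℝ) (t : ℝ) (A : Finset Ω) :
    blockProb blk (Function.update x e' t) A j = blockProb blk x A j := by
  have key : ∀ s : Finset Ω, ∑ a ∈ s.filter (fun a => blk a = j), Function.update x e' t a
      = ∑ a ∈ s.filter (fun a => blk a = j), x a := fun s =>
    Finset.sum_congr rfl fun a ha =>
      Function.update_of_ne
        (fun h => hj (by rw [← (Finset.mem_filter.mp ha).2, h, he'])) _ _
  unfold blockProb
  rw [key Finset.univ, key A]

lemma blockProb_insert {j : N} {e0 : Ω} (h : blk e0 ≠ j) (x : Ω → ℝ) (A : Finset Ω) :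
    blockProb blk x (insert e0 A) j = blockProb blk x A j := by
  have : (insert e0 A).filter (fun a => blk a = j) = A.filter (fun a => blk a = j) := by
    rw [Finset.filter_insert, if_neg h]
  unfold blockProb; rw [this]

lemma blockProb_erase {u j : N} {e' : Ω} (he' : blk e' = u) (hj : j ≠ u)
    (x : Ω → ℝ) (A : Finset Ω) :
    blockProb blk x (A.erase e') j = blockProb blk x A j := by
  have : (A.erase e').filter (fun a => blk a = j) = A.filter (fun a => blk a = j) := by
    ext a
    simp only [Finset.mem_filter, Finset.mem_erase]
    constructor
    · rintro ⟨⟨_, ha⟩, hb⟩; exact ⟨ha, hb⟩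
    · rintro ⟨ha, hb⟩
      exact ⟨⟨fun h => hj (by rw [← hb, h, he']), ha⟩, hb⟩
  unfold blockProb; rw [this]

lemma feasible_insert {u : N} {e' : Ω} (he' : blk e' = u) {A : Finset Ω}
    (hA : feasible blk A) (h0 : A.filter (fun a => blk a = u) = ∅) :
    feasible blk (insert e' A) := by
  intro j
  by_cases hju : j = u
  · subst hju
    rw [Finset.filter_insert, if_pos he', h0]
    simp
  · rw [Finset.filter_insert, if_neg (by rw [he']; exact fun h => hju h.symm)]
    exact hA j

lemma feasible_erase {e' : Ω} {A : Finset Ω} (hA : feasible blk A) :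
    feasible blk (A.erase e') := fun j =>
  le_trans (Finset.card_le_card (Finset.filter_subset_filter _ (Finset.erase_subset _ _))) (hA j)

lemma filter_eq_singleton {u : N} {e' : Ω} (he' : blk e' = u) {A : Finset Ω}
    (hA : feasible blk A) (he : e' ∈ A) :
    A.filter (fun a => blk a = u) = {e'} := by
  have hmem : e' ∈ A.filter (fun a => blk a = u) := by simp [he, he']
  exact Finset.eq_singleton_iff_unique_mem.mpr
    ⟨hmem, fun b hb => Finset.card_le_one.mp (hA u) b hb e' hmem⟩

/-- Derivative of a sum of product forms in direction `e'` with `blk e' = u ∈ T`. -/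
lemma pderiv_sum_prod (blk : Ω → N) {u : N} {e' : Ω} (he' : blk e' = u)
    (S : Finset (Finset Ω)) (c : Finset Ω → ℝ) (T : Finset N) (hu : u ∈ T) (x : Ω → ℝ) :
    pderiv (fun y => ∑ A ∈ S, c A * ∏ j ∈ T, blockProb blk y A j) e' x
      = ∑ A ∈ S, c A * coefR blk u e' A * ∏ j ∈ T.erase u, blockProb blk x A j := by
  unfold pderiv
  have hfun : (fun t : ℝ => ∑ A ∈ S, c A * ∏ j ∈ T, blockProb blk (Function.update x e' t) A j)
      = fun t => (∑ A ∈ S, c A * coefR blk u e' A * ∏ j ∈ T.erase u, blockProb blk x A j) * t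
        + ∑ A ∈ S, c A * (blockProb blk x A u - coefR blk u e' A * x e')
            * ∏ j ∈ T.erase u, blockProb blk x A j := by
    funext t
    rw [Finset.sum_mul, ← Finset.sum_add_distrib]
    refine Finset.sum_congr rfl fun A hA => ?_
    rw [← Finset.mul_prod_erase T _ hu, blockProb_update he' x t A,
      Finset.prod_congr rfl fun j hj =>
        blockProb_update_ne he' (Finset.ne_of_mem_erase hj) x t A]
    ring
  rw [hfun]
  have hd : HasDerivAt
      (fun t : ℝ => (∑ A ∈ S, c A * coefR blk u e' A * ∏ j ∈ T.erase u, blockProb blk x A j) * t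
        + ∑ A ∈ S, c A * (blockProb blk x A u - coefR blk u e' A * x e')
            * ∏ j ∈ T.erase u, blockProb blk x A j)
      (∑ A ∈ S, c A * coefR blk u e' A * ∏ j ∈ T.erase u, blockProb blk x A j) (x e') := by
    simpa using ((hasDerivAt_id (x e')).const_mul
      (∑ A ∈ S, c A * coefR blk u e' A * ∏ j ∈ T.erase u, blockProb blk x A j)).add_const
      (∑ A ∈ S, c A * (blockProb blk x A u - coefR blk u e' A * x e')
          * ∏ j ∈ T.erase u, blockProb blk x A j)
  exact hd.deriv

/-- Main computation lemma: derivative of a constrained sum-of-products form. -/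
lemma pderiv_sum_formula (blk : Ω → N) {u : N} {e' : Ω} (he' : blk e' = u)
    (T : Finset N) (hu : u ∈ T)
    (S : Finset (Finset Ω))
    (hfeas : ∀ A ∈ S, feasible blk A)
    (hSi : ∀ A ∈ S, A.filter (fun a => blk a = u) = ∅ → insert e' A ∈ S)
    (hSe : ∀ A ∈ S, e' ∈ A → A.erase e' ∈ S)
    (c : Finset Ω → ℝ) (x : Ω → ℝ) :
    pderiv (fun y => ∑ A ∈ S, c A * ∏ j ∈ T, blockProb blk y A j) e' x
      = ∑ A ∈ S.filter (fun A => A.filter (fun a => blk a = u) = ∅),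
          (c (insert e' A) - c A) * ∏ j ∈ T.erase u, blockProb blk x A j := by
  rw [pderiv_sum_prod blk he' S c T hu x]
  set P := fun A => ∏ j ∈ T.erase u, blockProb blk x A j with hP
  rw [← Finset.sum_filter_add_sum_filter_not S (fun A => A.filter (fun a => blk a = u) = ∅)]
  have h1 : ∑ A ∈ S.filter (fun A => A.filter (fun a => blk a = u) = ∅),
      c A * coefR blk u e' A * P A
      = ∑ A ∈ S.filter (fun A => A.filter (fun a => blk a = u) = ∅), -(c A * P A) := by
    refine Finset.sum_congr rfl fun A hA => ?_
    have h0 := (Finset.mem_filter.mp hA).2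
    rw [coefR, if_pos h0]; ring
  have h2 : ∑ A ∈ S.filter (fun A => ¬ A.filter (fun a => blk a = u) = ∅),
      c A * coefR blk u e' A * P A
      = ∑ A ∈ S.filter (fun A => A.filter (fun a => blk a = u) = ∅),
          c (insert e' A) * P A := by
    rw [← Finset.sum_filter_add_sum_filter_not
      (S.filter (fun A => ¬ A.filter (fun a => blk a = u) = ∅)) (fun A => e' ∈ A)]
    have hz : ∑ A ∈ (S.filter (fun A => ¬ A.filter (fun a => blk a = u) = ∅)).filter
        (fun A => ¬ e' ∈ A), c A * coefR blk u e' A * P A = 0 := by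
      refine Finset.sum_eq_zero fun A hA => ?_
      obtain ⟨hA1, hA2⟩ := Finset.mem_filter.mp hA
      rw [coefR, if_neg (Finset.mem_filter.mp hA1).2, if_neg hA2]; ring
    rw [hz, add_zero]
    refine Finset.sum_nbij' (fun A => A.erase e') (fun A => insert e' A) ?_ ?_ ?_ ?_ ?_
    · intro A hA
      obtain ⟨hA1, hmem⟩ := Finset.mem_filter.mp hA
      obtain ⟨hA0, _⟩ := Finset.mem_filter.mp hA1
      have hfA := hfeas A hA0
      refine Finset.mem_filter.mpr ⟨hSe A hA0 hmem, ?_⟩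
      have hsing := filter_eq_singleton he' hfA hmem
      rw [Finset.eq_empty_iff_forall_notMem]
      intro a ha
      obtain ⟨ha1, ha2⟩ := Finset.mem_filter.mp ha
      obtain ⟨hane, haA⟩ := Finset.mem_erase.mp ha1
      have : a ∈ A.filter (fun a => blk a = u) := Finset.mem_filter.mpr ⟨haA, ha2⟩
      rw [hsing, Finset.mem_singleton] at this
      exact hane this
    · intro B hB
      obtain ⟨hB1, h0⟩ := Finset.mem_filter.mp hB
      refine Finset.mem_filter.mpr ⟨Finset.mem_filter.mpr ⟨hSi B hB1 h0, ?_⟩,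
        Finset.mem_insert_self _ _⟩
      rw [Finset.filter_insert, if_pos he', h0]
      simp
    · intro A hA
      exact Finset.insert_erase (Finset.mem_filter.mp hA).2
    · intro B hB
      have h0 := (Finset.mem_filter.mp hB).2
      refine Finset.erase_insert fun hmem => ?_
      rw [Finset.eq_empty_iff_forall_notMem] at h0
      exact h0 e' (Finset.mem_filter.mpr ⟨hmem, he'⟩)
    · intro A hA
      obtain ⟨hA1, hmem⟩ := Finset.mem_filter.mp hA
      have hne := (Finset.mem_filter.mp hA1).2
      rw [coefR, if_neg hne, if_pos hmem, Finset.insert_erase hmem]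
      have : P (A.erase e') = P A :=
        Finset.prod_congr rfl fun j hj =>
          blockProb_erase he' (Finset.ne_of_mem_erase hj) x A
      rw [this]; ring
  rw [h1, h2, ← Finset.sum_add_distrib]
  exact (Finset.sum_congr rfl fun A hA => by ring).symm

lemma filter_congr' {α : Type*} {s : Finset α} {p q : α → Prop}
    {hp : DecidablePred p} {hq : DecidablePred q} (H : ∀ a ∈ s, p a ↔ q a) :
    @Finset.filter α p hp s = @Finset.filter α q hq s := by
  ext a
  simp only [Finset.mem_filter]
  exact ⟨fun h => ⟨h.1, (H a h.1).mp h.2⟩, fun h => ⟨h.1, (H a h.1).mpr h.2⟩⟩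

lemma blockProb_nonneg {x : Ω → ℝ} (hx : memPolytope blk x) (A : Finset Ω) (j : N) :
    0 ≤ blockProb blk x A j := by
  unfold blockProb
  split
  · linarith [hx.2 j]
  · exact Finset.sum_nonneg fun a _ => (hx.1 a).1

end aux


/-- for `e ∈ Ω_i` and `e' ∈ Ω_u` in distinct blocks (`u ≠ i`), the mixed
second partial derivative `∂²f̃/∂x_{e'}∂x_e` equals the sum over feasible sets avoiding
both blocks of the product of the other blocks' factors times the difference of marginal
gains; and if `F` is submodular this mixed partial is nonpositive on the polytope. -/
theorem pme_mixed_second_partial {N Ω : Type*} [Fintype N] [Fintype Ω]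
    (blk : Ω → N) (hblk : Function.Surjective blk)
    (F : Finset Ω → ℝ) (i u : N) (e e' : Ω)
    (he : blk e = i) (he' : blk e' = u) (hiu : u ≠ i) :
    (∀ x : Ω → ℝ,
      pderiv (fun y => pderiv (pme blk F) e y) e' x =
        ∑ A ∈ Finset.univ.filter
            (fun A => feasible blk A ∧ A.filter (fun a => blk a = i) = ∅ ∧
              A.filter (fun a => blk a = u) = ∅),
          (∏ j ∈ (Finset.univ.erase i).erase u, blockProb blk x A j) *
            ((F (insert e (insert e' A)) - F (insert e' A)) - (F (insert e A) - F A))) ∧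
    (Submodular F →
      ∀ x : Ω → ℝ, memPolytope blk x →
        pderiv (fun y => pderiv (pme blk F) e y) e' x ≤ 0) := by
  have hmain : ∀ x : Ω → ℝ,
      pderiv (fun y => pderiv (pme blk F) e y) e' x =
        ∑ A ∈ Finset.univ.filter
            (fun A => feasible blk A ∧ A.filter (fun a => blk a = i) = ∅ ∧
              A.filter (fun a => blk a = u) = ∅),
          (∏ j ∈ (Finset.univ.erase i).erase u, blockProb blk x A j) *
            ((F (insert e (insert e' A)) - F (insert e' A)) - (F (insert e A) - F A)) := by
    intro x
    refine Eq.trans (congrFun (congrArg (fun g => pderiv g e')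
      (funext fun y => pderiv_sum_formula blk he Finset.univ (Finset.mem_univ i)
        (Finset.univ.filter (fun A => feasible blk A))
        (fun A hA => (Finset.mem_filter.mp hA).2)
        (fun A hA h0 => Finset.mem_filter.mpr
          ⟨Finset.mem_univ _, feasible_insert he (Finset.mem_filter.mp hA).2 h0⟩)
        (fun A hA _ => Finset.mem_filter.mpr
          ⟨Finset.mem_univ _, feasible_erase (Finset.mem_filter.mp hA).2⟩)
        F y)) x) ?_
    refine (pderiv_sum_formula blk he' (Finset.univ.erase i)
      (Finset.mem_erase.mpr ⟨hiu, Finset.mem_univ u⟩) _ ?_ ?_ ?_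
      (fun A => F (insert e A) - F A) x).trans ?_
    · intro A hA
      exact (Finset.mem_filter.mp (Finset.mem_filter.mp hA).1).2
    · intro A hA h0
      obtain ⟨hA1, hA2⟩ := Finset.mem_filter.mp hA
      have hfA := (Finset.mem_filter.mp hA1).2
      refine Finset.mem_filter.mpr ⟨Finset.mem_filter.mpr
        ⟨Finset.mem_univ _, feasible_insert he' hfA h0⟩, ?_⟩
      rw [Finset.filter_insert, if_neg (fun hh => hiu (he'.symm.trans hh))]
      exact hA2
    · intro A hA hmem
      obtain ⟨hA1, hA2⟩ := Finset.mem_filter.mp hA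
      have hfA := (Finset.mem_filter.mp hA1).2
      refine Finset.mem_filter.mpr ⟨Finset.mem_filter.mpr
        ⟨Finset.mem_univ _, feasible_erase hfA⟩, ?_⟩
      exact Finset.subset_empty.mp
        (hA2 ▸ Finset.filter_subset_filter _ (Finset.erase_subset _ _))
    · refine Finset.sum_congr ?_ fun A hA => mul_comm _ _
      ext A
      simp only [Finset.mem_filter, Finset.mem_univ, true_and]
      tauto
  refine ⟨hmain, fun hsub x hx => ?_⟩
  rw [hmain x]
  apply Finset.sum_nonpos
  intro A hA
  obtain ⟨hfA, hi0, hu0⟩ := (Finset.mem_filter.mp hA).2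
  have hP : 0 ≤ ∏ j ∈ (Finset.univ.erase i).erase u, blockProb blk x A j :=
    Finset.prod_nonneg fun j _ => blockProb_nonneg hx A j
  have heA : e ∉ A := fun hmem => by
    rw [Finset.eq_empty_iff_forall_notMem] at hi0
    exact hi0 e (Finset.mem_filter.mpr ⟨hmem, he⟩)
  have hee' : e ∉ insert e' A := by
    intro hmem
    rcases Finset.mem_insert.mp hmem with hh | hh
    · exact hiu (he'.symm.trans (by rw [← hh, he]))
    · exact heA hh
  have hbr : F (insert e (insert e' A)) - F (insert e' A) ≤ F (insert e A) - F A :=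
    hsub A (insert e' A) (Finset.subset_insert _ _) e hee'
  exact mul_nonpos_iff.mpr (Or.inl ⟨hP, sub_nonpos.mpr hbr⟩)
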